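/- Let Y be a locally compact, second countable, Hausdorff topological space, and let μ be a Borel measure on Y × ℝ that is finite on compact sets and invariant under all translations in the second coordinate, i.e. the pushforward of μ under (y, t) ↦ (y, t + s) equals μ for every s ∈ ℝ. Then there exists a Borel measure ν₀ on Y, finite on compact sets, such that μ is the product measure ν₀ × m, where m is Lebesgue measure on ℝ. -/

import Mathlib

open MeasureTheory

private lemma key_rect {Y : Type*} [TopologicalSpace Y] [LocallyCompactSpace Y]
    [SecondCountableTopology Y] [T2Space Y] [MeasurableSpace Y] [BorelSpace Y]
    (μ : Measure (Y × ℝ)) [IsFiniteMeasureOnCompacts μ]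
    (hinv : ∀ s : ℝ, Measure.map (fun p : Y × ℝ => (p.1, p.2 + s)) μ = μ)
    {A : Set Y} (hA : MeasurableSet A) {K : Set Y} (hK : IsCompact K) (hAK : A ⊆ K)
    {B : Set ℝ} (hB : MeasurableSet B) :
    μ (A ×ˢ B) = μ (A ×ˢ Set.Ioc (0:ℝ) 1) * volume B := by
  set ρ : Measure ℝ := Measure.map Prod.snd (μ.restrict (A ×ˢ Set.univ)) with hρdef
  have hρ : ∀ C : Set ℝ, MeasurableSet C → ρ C = μ (A ×ˢ C) := by
    intro C hC
    rw [hρdef, Measure.map_apply measurable_snd hC,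
      Measure.restrict_apply (measurable_snd hC)]
    congr 1
    ext p
    simp [Set.mem_prod, and_comm]
  have hinvρ : ∀ s : ℝ, Measure.map (· + s) ρ = ρ := by
    intro s
    have hf : Measurable (fun p : Y × ℝ => (p.1, p.2 + s)) :=
      (measurable_fst.prodMk (measurable_snd.add_const s))
    have hpre : (fun p : Y × ℝ => (p.1, p.2 + s)) ⁻¹' (A ×ˢ Set.univ) = A ×ˢ Set.univ := by
      ext p; simp [Set.mem_prod]
    calc Measure.map (· + s) ρ
        = Measure.map ((· + s) ∘ Prod.snd) (μ.restrict (A ×ˢ Set.univ)) := by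
          rw [hρdef, Measure.map_map (measurable_add_const s) measurable_snd]
      _ = Measure.map (Prod.snd ∘ (fun p : Y × ℝ => (p.1, p.2 + s)))
            (μ.restrict (A ×ˢ Set.univ)) := rfl
      _ = Measure.map Prod.snd
            (Measure.map (fun p : Y × ℝ => (p.1, p.2 + s)) (μ.restrict (A ×ˢ Set.univ))) := by
          rw [Measure.map_map measurable_snd hf]
      _ = ρ := by
          rw [hρdef]
          congr 1
          conv_rhs => rw [← hinv s]
          rw [Measure.restrict_map hf (hA.prod MeasurableSet.univ), hpre]
  haveI : ρ.IsAddLeftInvariant := by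
    constructor
    intro g
    have : (fun x : ℝ => g + x) = (· + g) := by ext x; ring
    rw [this, hinvρ g]
  haveI : IsFiniteMeasureOnCompacts ρ := by
    constructor
    intro C hC
    rw [hρ C hC.measurableSet]
    exact lt_of_le_of_lt (measure_mono (Set.prod_mono hAK le_rfl))
      (hK.prod hC).measure_lt_top
  have heq : ρ = Measure.addHaarScalarFactor ρ volume • volume :=
    Measure.isAddLeftInvariant_eq_smul ρ volume
  have h1 : μ (A ×ˢ Set.Ioc (0:ℝ) 1) = (Measure.addHaarScalarFactor ρ volume : ENNReal) := by
    rw [← hρ _ measurableSet_Ioc]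
    conv_lhs => rw [heq]
    rw [Measure.smul_apply, Real.volume_Ioc]
    simp [ENNReal.smul_def]
  rw [← hρ B hB, h1]
  conv_lhs => rw [heq]
  rw [Measure.smul_apply, ENNReal.smul_def, smul_eq_mul]

/-- Let `Y` be a locally compact, second countable, Hausdorff space,
and let `μ` be a Borel measure on `Y × ℝ`, finite on compact sets, invariant under all
translations in the second coordinate. Then there exists a Borel measure `ν₀` on `Y`,
finite on compact sets, such that `μ = ν₀ × m` where `m` is Lebesgue measure on `ℝ`. -/
theorem stmt_8 {Y : Type*} [TopologicalSpace Y] [LocallyCompactSpace Y]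
    [SecondCountableTopology Y] [T2Space Y] [MeasurableSpace Y] [BorelSpace Y]
    (μ : Measure (Y × ℝ)) [IsFiniteMeasureOnCompacts μ]
    (hinv : ∀ s : ℝ, Measure.map (fun p : Y × ℝ => (p.1, p.2 + s)) μ = μ) :
    ∃ ν₀ : Measure Y, IsFiniteMeasureOnCompacts ν₀ ∧ μ = ν₀.prod volume := by
  set ν₀ : Measure Y := Measure.map Prod.fst (μ.restrict (Set.univ ×ˢ Set.Ioc (0:ℝ) 1))
    with hν₀def
  have hν₀ : ∀ A : Set Y, MeasurableSet A → ν₀ A = μ (A ×ˢ Set.Ioc (0:ℝ) 1) := by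
    intro A hA
    rw [hν₀def, Measure.map_apply measurable_fst hA,
      Measure.restrict_apply (measurable_fst hA)]
    congr 1
    ext p
    simp [Set.mem_prod, and_comm]
  haveI hfc : IsFiniteMeasureOnCompacts ν₀ := by
    constructor
    intro C hC
    rw [hν₀ C hC.measurableSet]
    exact lt_of_le_of_lt (measure_mono (Set.prod_mono le_rfl Set.Ioc_subset_Icc_self))
      (hC.prod isCompact_Icc).measure_lt_top
  refine ⟨ν₀, hfc, ?_⟩
  haveI : SigmaFinite ν₀ := by infer_instance
  symm
  refine Measure.prod_eq fun A B hA hB => ?_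
  -- exhaust A by compacts
  have key : ∀ {A' : Set Y}, MeasurableSet A' → ∀ {K : Set Y}, IsCompact K → A' ⊆ K →
      μ (A' ×ˢ B) = ν₀ A' * volume B := by
    intro A' hA' K hK hA'K
    rw [hν₀ A' hA']
    exact key_rect μ hinv hA' hK hA'K hB
  have hcov : ∀ y : Y, ∃ n, y ∈ compactCovering Y n := fun y => by
    have := iUnion_compactCovering Y
    have : y ∈ ⋃ n, compactCovering Y n := by rw [this]; trivial
    simpa using this
  have hmonoA : Monotone (fun n => (A ∩ compactCovering Y n) ×ˢ B) := by
    intro m n hmn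
    exact Set.prod_mono (Set.inter_subset_inter le_rfl (compactCovering_subset Y hmn)) le_rfl
  have hAeq : A ×ˢ B = ⋃ n, (A ∩ compactCovering Y n) ×ˢ B := by
    ext p
    simp only [Set.mem_iUnion, Set.mem_prod, Set.mem_inter_iff]
    constructor
    · rintro ⟨h1, h2⟩
      obtain ⟨n, hn⟩ := hcov p.1
      exact ⟨n, ⟨h1, hn⟩, h2⟩
    · rintro ⟨n, ⟨h1, _⟩, h2⟩
      exact ⟨h1, h2⟩
  have hmeas : ∀ n, MeasurableSet (A ∩ compactCovering Y n) := fun n =>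
    hA.inter (isCompact_compactCovering Y n).measurableSet
  calc μ (A ×ˢ B) = ⨆ n, μ ((A ∩ compactCovering Y n) ×ˢ B) := by
        rw [hAeq, Directed.measure_iUnion (Monotone.directed_le hmonoA)]
      _ = ⨆ n, ν₀ (A ∩ compactCovering Y n) * volume B := by
        congr 1; ext n
        exact key (hmeas n) (isCompact_compactCovering Y n) Set.inter_subset_right
      _ = (⨆ n, ν₀ (A ∩ compactCovering Y n)) * volume B := by
        rw [ENNReal.iSup_mul]
      _ = ν₀ A * volume B := by
        congr 1
        have hAeq' : A = ⋃ n, A ∩ compactCovering Y n := by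
          ext y
          simp only [Set.mem_iUnion, Set.mem_inter_iff]
          exact ⟨fun h => (hcov y).imp fun n hn => ⟨h, hn⟩, fun ⟨n, h, _⟩ => h⟩
        conv_rhs => rw [hAeq']
        rw [Directed.measure_iUnion]
        exact Monotone.directed_le fun m n hmn =>
          Set.inter_subset_inter le_rfl (compactCovering_subset Y hmn)
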